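/- Mechanism 2 Nash-implements maxmin welfare: for every profile of nonempty true desired sets R̃_1,…,R̃_n, the induced game (where each agent's strategy is a tuple of reported sets and her payoff is her true utility for the resulting allocation) has at least one Nash equilibrium, and every Nash equilibrium strategy profile yields a maxmin-optimal allocation. -/

import Mathlib

open scoped Classical
open Real

namespace BandwidthAlloc

/-- A bid: `none` denotes the special bid β; `some r` denotes the real bid `r ≥ 0`. -/
abbrev Bid := Option NNReal

/-- Numeric value of a bid (β is treated as 0 in arithmetic). -/
noncomputable def bval (b : Bid) : ℝ := ((b.getD 0 : NNReal) : ℝ)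

/-- A bid is positive when it is neither 0 nor β. -/
def posBid (b : Bid) : Prop := 0 < bval b

/-- Utility of the bundle `xi` for an agent with desired set `Ri`: `min_{j ∈ Ri} xi j`. -/
noncomputable def bundleUtil {m : ℕ} (Ri : Finset (Fin m)) (xi : Fin m → ℝ) : ℝ :=
  sInf (xi '' (Ri : Set (Fin m)))

/-- Bandwidth-allocation utility of agent `i` under allocation `x`. -/
noncomputable def util {n m : ℕ} (R : Fin n → Finset (Fin m))
    (x : Fin n → Fin m → ℝ) (i : Fin n) : ℝ :=
  bundleUtil (R i) (x i)

/-- Weights: `w R i j = 1` iff `j ∈ R i`, else `0`. -/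
noncomputable def w {n m : ℕ} (R : Fin n → Finset (Fin m)) (i : Fin n) (j : Fin m) : ℝ :=
  if j ∈ R i then 1 else 0

/-- A valid (nonnegative, supply-respecting) allocation. -/
def validAlloc {n m : ℕ} (s : Fin m → ℝ) (x : Fin n → Fin m → ℝ) : Prop :=
  (∀ i j, 0 ≤ x i j) ∧ ∀ j, ∑ i, x i j ≤ s j

/-- CES welfare of the utility vector `v` (`ρ = 0` is Nash welfare; for `ρ < 0` a zero
utility yields welfare `0`, the limiting convention). -/
noncomputable def ces (ρ : ℝ) {n : ℕ} (v : Fin n → ℝ) : ℝ :=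
  if ρ = 0 then ∏ i, v i
  else if ρ < 0 ∧ ∃ i, v i = 0 then 0
  else (∑ i, v i ^ ρ) ^ (1 / ρ)

/-- `Ψ_ρ`: `x` is a valid allocation maximizing CES welfare among valid allocations. -/
def maxCES (ρ : ℝ) {n m : ℕ} (s : Fin m → ℝ) (R : Fin n → Finset (Fin m))
    (x : Fin n → Fin m → ℝ) : Prop :=
  validAlloc s x ∧ ∀ y, validAlloc s y → ces ρ (util R y) ≤ ces ρ (util R x)

/-- Constraint curve: continuous, normalized, strictly increasing, nonnegative on `[0,∞)`. -/
def IsConstraintCurve (f : ℝ → ℝ) : Prop :=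
  ContinuousOn f (Set.Ici 0) ∧ f 0 = 0 ∧ StrictMonoOn f (Set.Ici 0) ∧
    ∀ y ∈ Set.Ici (0 : ℝ), 0 ≤ f y

/-- `g` is identically zero on `[0,∞)`. -/
def zeroOn (g : ℝ → ℝ) : Prop := ∀ y ∈ Set.Ici (0 : ℝ), g y = 0

/-- Price curve: continuous, normalized, nonnegative, and either strictly increasing or
identically zero on `[0,∞)`. -/
def IsPriceCurve (g : ℝ → ℝ) : Prop :=
  ContinuousOn g (Set.Ici 0) ∧ g 0 = 0 ∧ (∀ y ∈ Set.Ici (0 : ℝ), 0 ≤ g y) ∧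
    (StrictMonoOn g (Set.Ici 0) ∨ zeroOn g)

/-- Cost of the bundle `xi` under price curves `g`. -/
noncomputable def cost {m : ℕ} (g : Fin m → ℝ → ℝ) (xi : Fin m → ℝ) : ℝ :=
  ∑ j, g j (xi j)

/-- `xi` is in the demand set of an agent with desired set `Ri` under price curves `g`. -/
def inDemand {m : ℕ} (g : Fin m → ℝ → ℝ) (Ri : Finset (Fin m)) (xi : Fin m → ℝ) : Prop :=
  (∀ j, 0 ≤ xi j) ∧ cost g xi ≤ 1 ∧
    ∀ yi : Fin m → ℝ, (∀ j, 0 ≤ yi j) → cost g yi ≤ 1 → bundleUtil Ri yi ≤ bundleUtil Ri xi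

/-- Price curve equilibrium. -/
def isPCE {n m : ℕ} (s : Fin m → ℝ) (R : Fin n → Finset (Fin m))
    (x : Fin n → Fin m → ℝ) (g : Fin m → ℝ → ℝ) : Prop :=
  (∀ i, inDemand g (R i) (x i)) ∧ (∀ j, ∑ i, x i j ≤ s j) ∧
    ∀ j, ¬ zeroOn (g j) → ∑ i, x i j = s j

/-- Step 1 of the ATP allocation rule: proportional sharing. -/
noncomputable def atp1 {n m : ℕ} (s : Fin m → ℝ) (b : Fin n → Fin m → Bid)
    (i : Fin n) (j : Fin m) : ℝ :=
  bval (b i j) / (∑ k, bval (b k j)) * s j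

/-- Steps 1–2 of the ATP allocation rule: goods with a positive bid are shared
proportionally; on a good where everyone bids `0` or `β`, an agent bidding `β` receives
as much as she receives of some fixed good on which she bids positively. -/
noncomputable def atp2 {n m : ℕ} (s : Fin m → ℝ) (b : Fin n → Fin m → Bid)
    (i : Fin n) (j : Fin m) : ℝ :=
  if ∃ k, posBid (b k j) then atp1 s b i j
  else if b i j = none then
    (if h : ∃ ℓ, posBid (b i ℓ) then atp1 s b i (Classical.choose h) else 0)
  else 0

/-- The full ATP allocation rule (steps 1–3): agents bidding `β` on an oversubscribed
step-2 good are penalized with the zero bundle. -/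
noncomputable def atp {n m : ℕ} (s : Fin m → ℝ) (b : Fin n → Fin m → Bid)
    (i : Fin n) (j : Fin m) : ℝ :=
  if ∃ ℓ, (¬ ∃ k, posBid (b k ℓ)) ∧ b i ℓ = none ∧ s ℓ < ∑ k, atp2 s b k ℓ then 0
  else atp2 s b i j

/-- Total bid-constraint cost `C_f(b_i)` of agent `i`'s bid vector. -/
noncomputable def bidCost {m : ℕ} (f : Fin m → ℝ → ℝ) (bi : Fin m → Bid) : ℝ :=
  ∑ j, f j (bval (bi j))

/-- A bid vector is feasible if it obeys the bid constraint `C_f(b_i) ≤ 1`. -/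
def feasibleBid {m : ℕ} (f : Fin m → ℝ → ℝ) (bi : Fin m → Bid) : Prop :=
  bidCost f bi ≤ 1

/-- `b` is a Nash equilibrium of `ATP(f)`: all bids are feasible and no agent can
strictly increase her utility by a unilateral feasible deviation. -/
def isNE {n m : ℕ} (s : Fin m → ℝ) (f : Fin m → ℝ → ℝ)
    (R : Fin n → Finset (Fin m)) (b : Fin n → Fin m → Bid) : Prop :=
  (∀ i, feasibleBid f (b i)) ∧
    ∀ (i : Fin n) (bi' : Fin m → Bid), feasibleBid f bi' →
      util R (atp s (Function.update b i bi')) i ≤ util R (atp s b) i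

/-- `NE_X(ATP(f))`: allocations arising from Nash equilibrium bid profiles. -/
def NEX {n m : ℕ} (s : Fin m → ℝ) (f : Fin m → ℝ → ℝ)
    (R : Fin n → Finset (Fin m)) : Set (Fin n → Fin m → ℝ) :=
  {x | ∃ b, isNE s f R b ∧ x = atp s b}

/-- `f` is homogeneous of degree `α` on the nonnegative reals. -/
def Homog (f : ℝ → ℝ) (α : ℝ) : Prop :=
  ∀ c ≥ (0 : ℝ), ∀ y ≥ (0 : ℝ), f (c * y) = c ^ α * f y

/-- `γ* = max {γ ≥ 0 : γ · Σ_i w_{ij} ≤ s_j for all j}` of Mechanism 1. -/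
noncomputable def gammaStar {n m : ℕ} (s : Fin m → ℝ) (R : Fin n → Finset (Fin m)) : ℝ :=
  sSup {γ : ℝ | 0 ≤ γ ∧ ∀ j, γ * ∑ i, w R i j ≤ s j}

/-- Mechanism 1: `x i j = γ* · w i j`. -/
noncomputable def mech1 {n m : ℕ} (s : Fin m → ℝ) (R : Fin n → Finset (Fin m)) :
    Fin n → Fin m → ℝ :=
  fun i j => gammaStar s R * w R i j

/-- `min_i u_i(x_i)`. -/
noncomputable def minUtil {n m : ℕ} (R : Fin n → Finset (Fin m))
    (x : Fin n → Fin m → ℝ) : ℝ :=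
  sInf (Set.range fun i => util R x i)

/-- `x` is maxmin-optimal: valid and attaining the maximum of `min_i u_i` over valid
allocations. -/
def maxminOptimal {n m : ℕ} (s : Fin m → ℝ) (R : Fin n → Finset (Fin m))
    (x : Fin n → Fin m → ℝ) : Prop :=
  validAlloc s x ∧ ∀ y, validAlloc s y → minUtil R y ≤ minUtil R x

/-- Mechanism 2: `P i k` is the set agent `i` claims agent `k` desires.
`eta P i = |{k : R_k(k) ≠ R_k(i)}|`. -/
noncomputable def eta {n m : ℕ} (P : Fin n → Fin n → Finset (Fin m)) (i : Fin n) : ℕ :=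
  (Finset.univ.filter fun k => P k k ≠ P i k).card

/-- Agent `i` is in `N̄`: for some `k`, `R_k(k) ⊊ R_k(i)`. -/
def inNbar {n m : ℕ} (P : Fin n → Fin n → Finset (Fin m)) (i : Fin n) : Prop :=
  ∃ k, P k k ⊂ P i k

/-- The penalty factor `α_i` of Mechanism 2. -/
noncomputable def alpha {n m : ℕ} (P : Fin n → Fin n → Finset (Fin m)) (i : Fin n) : ℝ :=
  if inNbar P i then 0 else 1 - (eta P i : ℝ) / n

/-- Effective reported sets of Mechanism 2: agents in `N̄` are replaced by `∅`. -/
noncomputable def effSets {n m : ℕ} (P : Fin n → Fin n → Finset (Fin m)) :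
    Fin n → Finset (Fin m) :=
  fun i => if inNbar P i then ∅ else P i i

/-- Mechanism 2: the allocation `x_i = α_i · y_i` where `y` is the Mechanism 1 outcome
on the effective sets. -/
noncomputable def mech2 {n m : ℕ} (s : Fin m → ℝ) (P : Fin n → Fin n → Finset (Fin m)) :
    Fin n → Fin m → ℝ :=
  fun i j => alpha P i * mech1 s (effSets P) i j

/-- A report profile `P` (where `P i k` is the set agent `i` claims agent `k` desires)
is a Nash equilibrium of Mechanism 2 w.r.t. true desired sets `Rt`: no agent can
strictly increase her true utility by unilaterally changing her report tuple. -/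
def isNE2 {n m : ℕ} (s : Fin m → ℝ) (Rt : Fin n → Finset (Fin m))
    (P : Fin n → Fin n → Finset (Fin m)) : Prop :=
  ∀ (i : Fin n) (Pi' : Fin n → Finset (Fin m)),
    util Rt (mech2 s (Function.update P i Pi')) i ≤ util Rt (mech2 s P) i

section Helpers

variable {n m : ℕ}

lemma w_nonneg (R : Fin n → Finset (Fin m)) (i : Fin n) (j : Fin m) : 0 ≤ w R i j := by
  unfold w; split <;> norm_num

lemma w_le_one (R : Fin n → Finset (Fin m)) (i : Fin n) (j : Fin m) : w R i j ≤ 1 := by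
  unfold w; split <;> norm_num

lemma w_eq_one_of_mem {R : Fin n → Finset (Fin m)} {i : Fin n} {j : Fin m}
    (h : j ∈ R i) : w R i j = 1 := by simp [w, h]

lemma w_eq_zero_of_not_mem {R : Fin n → Finset (Fin m)} {i : Fin n} {j : Fin m}
    (h : j ∉ R i) : w R i j = 0 := by simp [w, h]

lemma sumw_nonneg (R : Fin n → Finset (Fin m)) (j : Fin m) : 0 ≤ ∑ i, w R i j :=
  Finset.sum_nonneg fun i _ => w_nonneg R i j

lemma sumw_le (R : Fin n → Finset (Fin m)) (j : Fin m) : ∑ i, w R i j ≤ n := by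
  calc ∑ i, w R i j ≤ ∑ _i : Fin n, (1 : ℝ) :=
        Finset.sum_le_sum fun i _ => w_le_one R i j
    _ = n := by simp

lemma one_le_sumw {R : Fin n → Finset (Fin m)} {i : Fin n} {j : Fin m}
    (h : j ∈ R i) : 1 ≤ ∑ i, w R i j := by
  have := Finset.single_le_sum (f := fun k => w R k j)
    (fun k _ => w_nonneg R k j) (Finset.mem_univ i)
  simpa [w_eq_one_of_mem h] using this

/-- The feasible set defining `gammaStar`. -/
def Gset (s : Fin m → ℝ) (R : Fin n → Finset (Fin m)) : Set ℝ :=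
  {γ : ℝ | 0 ≤ γ ∧ ∀ j, γ * ∑ i, w R i j ≤ s j}

lemma gammaStar_def (s : Fin m → ℝ) (R : Fin n → Finset (Fin m)) :
    gammaStar s R = sSup (Gset s R) := rfl

lemma zero_mem_Gset {s : Fin m → ℝ} (hs : ∀ j, 0 < s j) (R : Fin n → Finset (Fin m)) :
    (0 : ℝ) ∈ Gset s R := ⟨le_refl 0, fun j => by simpa using (hs j).le⟩

lemma bddAbove_Gset {s : Fin m → ℝ} (R : Fin n → Finset (Fin m))
    (hi : ∃ i, (R i).Nonempty) : BddAbove (Gset s R) := by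
  obtain ⟨i, j, hj⟩ := hi
  refine ⟨s j, fun γ hγ => ?_⟩
  have h1 : 1 ≤ ∑ k, w R k j := one_le_sumw hj
  calc γ = γ * 1 := (mul_one γ).symm
    _ ≤ γ * ∑ k, w R k j := mul_le_mul_of_nonneg_left h1 hγ.1
    _ ≤ s j := hγ.2 j

lemma gammaStar_nonneg (s : Fin m → ℝ) (R : Fin n → Finset (Fin m)) :
    0 ≤ gammaStar s R :=
  Real.sSup_nonneg fun _ hγ => hγ.1

lemma gammaStar_le_supply {s : Fin m → ℝ} (hs : ∀ j, 0 < s j)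
    (R : Fin n → Finset (Fin m)) (j : Fin m) :
    gammaStar s R * ∑ i, w R i j ≤ s j := by
  rcases eq_or_lt_of_le (sumw_nonneg R j) with h | h
  · rw [← h, mul_zero]; exact (hs j).le
  · have hub : gammaStar s R ≤ s j / ∑ i, w R i j := by
      apply csSup_le ⟨0, zero_mem_Gset hs R⟩
      intro γ hγ
      exact (le_div_iff₀ h).2 (hγ.2 j)
    exact (le_div_iff₀ h).1 hub

lemma le_gammaStar {s : Fin m → ℝ} {R : Fin n → Finset (Fin m)}
    (hi : ∃ i, (R i).Nonempty) {γ : ℝ} (hγ : γ ∈ Gset s R) : γ ≤ gammaStar s R :=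
  le_csSup (bddAbove_Gset R hi) hγ

lemma gammaStar_pos {s : Fin m → ℝ} (hs : ∀ j, 0 < s j) (hn : 0 < n)
    {R : Fin n → Finset (Fin m)} (hi : ∃ i, (R i).Nonempty) :
    0 < gammaStar s R := by
  obtain ⟨i, j0, hj0⟩ := hi
  have hm : (Finset.univ : Finset (Fin m)).Nonempty := ⟨j0, Finset.mem_univ j0⟩
  set γ0 : ℝ := Finset.univ.inf' hm (fun j => s j / n) with hγ0
  have hnpos : (0 : ℝ) < n := by exact_mod_cast hn
  have hγ0pos : 0 < γ0 := by
    rw [hγ0, Finset.lt_inf'_iff]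
    exact fun j _ => div_pos (hs j) hnpos
  have hmem : γ0 ∈ Gset s R := by
    refine ⟨hγ0pos.le, fun j => ?_⟩
    calc γ0 * ∑ i, w R i j ≤ γ0 * n :=
          mul_le_mul_of_nonneg_left (sumw_le R j) hγ0pos.le
      _ ≤ (s j / n) * n :=
          mul_le_mul_of_nonneg_right (Finset.inf'_le _ (Finset.mem_univ j)) hnpos.le
      _ = s j := div_mul_cancel₀ (s j) hnpos.ne'
  exact lt_of_lt_of_le hγ0pos (le_gammaStar ⟨i, j0, hj0⟩ hmem)

lemma gammaStar_anti {s : Fin m → ℝ} (hs : ∀ j, 0 < s j)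
    {R R' : Fin n → Finset (Fin m)}
    (h : ∀ j, ∑ i, w R i j ≤ ∑ i, w R' i j) (hi : ∃ i, (R i).Nonempty) :
    gammaStar s R' ≤ gammaStar s R := by
  apply csSup_le_csSup (bddAbove_Gset R hi) ⟨0, zero_mem_Gset hs R'⟩
  rintro γ ⟨hγ0, hγ⟩
  exact ⟨hγ0, fun j => le_trans (mul_le_mul_of_nonneg_left (h j) hγ0) (hγ j)⟩

lemma bundleUtil_le {Ri : Finset (Fin m)} {xi : Fin m → ℝ} {j : Fin m}
    (hj : j ∈ Ri) : bundleUtil Ri xi ≤ xi j :=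
  csInf_le ((Ri.finite_toSet.image xi).bddBelow) ⟨j, by simpa using hj, rfl⟩

lemma le_bundleUtil {Ri : Finset (Fin m)} {xi : Fin m → ℝ} {c : ℝ}
    (hne : Ri.Nonempty) (h : ∀ j ∈ Ri, c ≤ xi j) : c ≤ bundleUtil Ri xi := by
  apply le_csInf
  · obtain ⟨j, hj⟩ := hne
    exact ⟨xi j, ⟨j, by simpa using hj, rfl⟩⟩
  · rintro b ⟨j, hj, rfl⟩
    exact h j (by simpa using hj)

lemma bundleUtil_const {Ri : Finset (Fin m)} {xi : Fin m → ℝ} {c : ℝ}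
    (hne : Ri.Nonempty) (h : ∀ j ∈ Ri, xi j = c) : bundleUtil Ri xi = c := by
  obtain ⟨j, hj⟩ := hne
  refine le_antisymm ?_ (le_bundleUtil ⟨j, hj⟩ fun j' hj' => (h j' hj').ge)
  calc bundleUtil Ri xi ≤ xi j := bundleUtil_le hj
    _ = c := h j hj

lemma eta_le (P : Fin n → Fin n → Finset (Fin m)) (i : Fin n) : eta P i ≤ n := by
  calc eta P i ≤ (Finset.univ : Finset (Fin n)).card := Finset.card_filter_le _ _
    _ = n := by simp

lemma alpha_nonneg (P : Fin n → Fin n → Finset (Fin m)) (i : Fin n) :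
    0 ≤ alpha P i := by
  unfold alpha
  split
  · exact le_refl 0
  · rcases Nat.eq_zero_or_pos n with h | h
    · exact absurd (Fin.pos i) (by omega)
    · have : (eta P i : ℝ) / n ≤ 1 := by
        rw [div_le_one (by exact_mod_cast h)]
        exact_mod_cast eta_le P i
      linarith

lemma alpha_le_one (P : Fin n → Fin n → Finset (Fin m)) (i : Fin n) :
    alpha P i ≤ 1 := by
  unfold alpha
  split
  · norm_num
  · have : (0:ℝ) ≤ (eta P i : ℝ) / n := by positivity
    linarith

lemma util_mech2_of_subset (s : Fin m → ℝ) (Rt : Fin n → Finset (Fin m))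
    (P : Fin n → Fin n → Finset (Fin m)) (i : Fin n) (hne : (Rt i).Nonempty)
    (hsub : Rt i ⊆ effSets P i) :
    util Rt (mech2 s P) i = alpha P i * gammaStar s (effSets P) := by
  apply bundleUtil_const hne
  intro j hj
  have hw : w (effSets P) i j = 1 := w_eq_one_of_mem (hsub hj)
  simp [mech2, mech1, hw]

lemma util_mech2_of_inNbar (s : Fin m → ℝ) (Rt : Fin n → Finset (Fin m))
    {P : Fin n → Fin n → Finset (Fin m)} {i : Fin n} (hne : (Rt i).Nonempty)
    (h : inNbar P i) : util Rt (mech2 s P) i = 0 := by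
  apply bundleUtil_const hne
  intro j _
  simp [mech2, alpha, h]

lemma util_mech2_nonpos (s : Fin m → ℝ) (Rt : Fin n → Finset (Fin m))
    {P : Fin n → Fin n → Finset (Fin m)} {i : Fin n} {j0 : Fin m}
    (hj0 : j0 ∈ Rt i) (hj0' : j0 ∉ effSets P i) : util Rt (mech2 s P) i ≤ 0 := by
  calc util Rt (mech2 s P) i ≤ mech2 s P i j0 := bundleUtil_le hj0
    _ = 0 := by simp [mech2, mech1, w_eq_zero_of_not_mem hj0']

end Helpers

lemma minUtil_le_gammaStar {s : Fin m → ℝ} (hs : ∀ j, 0 < s j) (hn : 0 < n)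
    (Rt : Fin n → Finset (Fin m)) (hRt : ∀ i, (Rt i).Nonempty)
    (z : Fin n → Fin m → ℝ) (hz : validAlloc s z) :
    minUtil Rt z ≤ gammaStar s Rt := by
  haveI : Nonempty (Fin n) := ⟨⟨0, hn⟩⟩
  set c := minUtil Rt z with hc
  have hcle : ∀ i, c ≤ util Rt z i := fun i =>
    csInf_le (Set.finite_range _).bddBelow (Set.mem_range_self i)
  have hc0 : 0 ≤ c := by
    apply le_csInf (Set.range_nonempty _)
    rintro b ⟨i, rfl⟩
    exact le_bundleUtil (hRt i) fun j _ => hz.1 i j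
  apply le_gammaStar ⟨⟨0, hn⟩, hRt _⟩
  refine ⟨hc0, fun j => ?_⟩
  have hpt : ∀ i : Fin n, c * w Rt i j ≤ z i j := by
    intro i
    by_cases hj : j ∈ Rt i
    · rw [w_eq_one_of_mem hj, mul_one]
      exact le_trans (hcle i) (bundleUtil_le hj)
    · rw [w_eq_zero_of_not_mem hj, mul_zero]
      exact hz.1 i j
  calc c * ∑ i, w Rt i j = ∑ i, c * w Rt i j := Finset.mul_sum _ _ _
    _ ≤ ∑ i, z i j := Finset.sum_le_sum fun i _ => hpt i
    _ ≤ s j := hz.2 j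

/-- Mechanism 2 Nash-implements maxmin welfare: for every profile of
nonempty true desired sets, the induced game has at least one Nash equilibrium, and
every Nash equilibrium yields a maxmin-optimal allocation. -/
theorem mech2_nash_implements {n m : ℕ} (s : Fin m → ℝ) (hs : ∀ j, 0 < s j)
    (Rt : Fin n → Finset (Fin m)) (hRt : ∀ i, (Rt i).Nonempty) :
    (∃ P : Fin n → Fin n → Finset (Fin m), isNE2 s Rt P) ∧
      ∀ P : Fin n → Fin n → Finset (Fin m), isNE2 s Rt P →
        maxminOptimal s Rt (mech2 s P) := by
  constructor
  · -- Existence: the truthful profile is a Nash equilibrium.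
    refine ⟨fun _ k => Rt k, ?_⟩
    intro i Pi'
    set P : Fin n → Fin n → Finset (Fin m) := fun _ k => Rt k with hP
    have hNbar : ∀ k, ¬ inNbar P k := by
      rintro k ⟨k', hk'⟩
      exact ssubset_irrefl _ hk'
    have hES : effSets P = Rt := by
      funext k; exact if_neg (hNbar k)
    have hα : alpha P i = 1 := by
      unfold alpha; rw [if_neg (hNbar i)]; simp [eta, hP]
    have hbase : util Rt (mech2 s P) i = gammaStar s Rt := by
      rw [util_mech2_of_subset s Rt P i (hRt i)
        (by rw [hES] : Rt i ⊆ effSets P i), hα, hES, one_mul]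
    rw [hbase]
    set Q := Function.update P i Pi' with hQdef
    by_cases hA : inNbar Q i
    · rw [util_mech2_of_inNbar s Rt (hRt i) hA]
      exact gammaStar_nonneg s Rt
    · have hQi : Q i = Pi' := Function.update_self i Pi' P
      have hQd : ∀ k, k ≠ i → Q k = P k := fun k hk => Function.update_of_ne hk Pi' P
      have hEQi : effSets Q i = Pi' i := by
        unfold effSets; rw [if_neg hA, hQi]
      by_cases hsub : Rt i ⊆ Pi' i
      · have hEQ : ∀ k, k ≠ i → effSets Q k = Rt k := by
          intro k hk
          have hnb : ¬ inNbar Q k := by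
            rintro ⟨k', hk'⟩
            rw [hQd k hk] at hk'
            by_cases h' : k' = i
            · subst h'
              rw [hQi] at hk'
              have : P k k' = Rt k' := rfl
              rw [this] at hk'
              exact ssubset_irrefl _ (lt_of_lt_of_le hk' hsub)
            · rw [hQd k' h'] at hk'
              exact ssubset_irrefl _ hk'
          unfold effSets
          rw [if_neg hnb, hQd k hk]
        have hutil : util Rt (mech2 s Q) i = alpha Q i * gammaStar s (effSets Q) :=
          util_mech2_of_subset s Rt Q i (hRt i) (by rw [hEQi]; exact hsub)
        rw [hutil]
        have hγle : gammaStar s (effSets Q) ≤ gammaStar s Rt := by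
          refine gammaStar_anti hs (fun j => Finset.sum_le_sum fun k _ => ?_) ⟨i, hRt i⟩
          rcases eq_or_ne k i with rfl | hk
          · by_cases hj : j ∈ Rt k
            · rw [w_eq_one_of_mem hj,
                w_eq_one_of_mem (show j ∈ effSets Q k by rw [hEQi]; exact hsub hj)]
            · rw [w_eq_zero_of_not_mem hj]
              exact w_nonneg _ _ _
          · rw [show w Rt k j = w (effSets Q) k j by unfold w; rw [hEQ k hk]]
        calc alpha Q i * gammaStar s (effSets Q) ≤ 1 * gammaStar s Rt :=
              mul_le_mul (alpha_le_one Q i) hγle (gammaStar_nonneg _ _) zero_le_one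
          _ = gammaStar s Rt := one_mul _
      · obtain ⟨j0, hj0, hj0'⟩ := Finset.not_subset.1 hsub
        exact le_trans (util_mech2_nonpos s Rt hj0 (by rw [hEQi]; exact hj0'))
          (gammaStar_nonneg s Rt)
  · intro P hNE
    rcases Nat.eq_zero_or_pos n with hn0 | hn
    · -- degenerate case n = 0
      haveI hE0 : IsEmpty (Fin n) := ⟨fun i => absurd i.2 (by omega)⟩
      constructor
      · refine ⟨fun i => isEmptyElim i, fun j => ?_⟩
        rw [Finset.univ_eq_empty, Finset.sum_empty]
        exact (hs j).le
      · intro y _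
        unfold minUtil
        rw [Set.range_eq_empty, Set.range_eq_empty]
    · -- main case n > 0
      -- Step 1: at equilibrium every agent has positive utility, hence is not in N̄
      -- and her reported set covers her true set.
      have hstep1 : ∀ i, ¬ inNbar P i ∧ Rt i ⊆ effSets P i ∧
          0 < util Rt (mech2 s P) i := by
        intro i
        set Pi' : Fin n → Finset (Fin m) := fun k => if k = i then Rt i else P k k
          with hPi'
        set Q := Function.update P i Pi' with hQdef
        have hQi : Q i = Pi' := Function.update_self i Pi' P
        have hQd : ∀ k, k ≠ i → Q k = P k := fun k hk => Function.update_of_ne hk Pi' P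
        have hdiag : ∀ k, Q k k = if k = i then Rt i else P k k := by
          intro k
          rcases eq_or_ne k i with rfl | hk
          · rw [hQi]
          · rw [hQd k hk, if_neg hk]
        have hQik : ∀ k, Q i k = if k = i then Rt i else P k k := by
          intro k; rw [hQi]
        have hQN : ¬ inNbar Q i := by
          rintro ⟨k, hk⟩
          rw [hdiag k, hQik k] at hk
          exact ssubset_irrefl _ hk
        have hα : alpha Q i = 1 := by
          have he : eta Q i = 0 := by
            unfold eta
            rw [Finset.card_eq_zero, Finset.filter_eq_empty_iff]
            intro k _
            simp [hdiag k, hQik k]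
          unfold alpha
          rw [if_neg hQN, he]
          simp
        have hEQi : effSets Q i = Rt i := by
          unfold effSets; rw [if_neg hQN, hQi, hPi']; simp
        have hdevutil : util Rt (mech2 s Q) i = gammaStar s (effSets Q) := by
          rw [util_mech2_of_subset s Rt Q i (hRt i) (by rw [hEQi] : Rt i ⊆ effSets Q i),
            hα, one_mul]
        have hdevpos : 0 < util Rt (mech2 s Q) i := by
          rw [hdevutil]
          exact gammaStar_pos hs hn ⟨i, by rw [hEQi]; exact hRt i⟩
        have hNEi := hNE i Pi'
        rw [← hQdef] at hNEi
        have hupos : 0 < util Rt (mech2 s P) i := lt_of_lt_of_le hdevpos hNEi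
        have hnb : ¬ inNbar P i := by
          intro h
          rw [util_mech2_of_inNbar s Rt (hRt i) h] at hupos
          exact lt_irrefl _ hupos
        have hsub : Rt i ⊆ effSets P i := by
          by_contra h
          obtain ⟨j0, hj0, hj0'⟩ := Finset.not_subset.1 h
          exact absurd (lt_of_lt_of_le hupos (util_mech2_nonpos s Rt hj0 hj0'))
            (lt_irrefl 0)
        exact ⟨hnb, hsub, hupos⟩
      have hform : ∀ i, util Rt (mech2 s P) i = alpha P i * gammaStar s (effSets P) :=
        fun i => util_mech2_of_subset s Rt P i (hRt i) (hstep1 i).2.1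
      have hγE : 0 < gammaStar s (effSets P) := by
        rcases lt_or_ge 0 (gammaStar s (effSets P)) with h | h
        · exact h
        · exfalso
          have hu := (hstep1 ⟨0, hn⟩).2.2
          rw [hform ⟨0, hn⟩] at hu
          nlinarith [alpha_nonneg P ⟨0, hn⟩]
      -- Step 2: every penalty factor equals 1; in particular all reports agree.
      have hstep2 : ∀ i, alpha P i = 1 := by
        intro i
        set Pi' : Fin n → Finset (Fin m) := fun k => P k k with hPi'
        set Q := Function.update P i Pi' with hQdef
        have hQi : Q i = Pi' := Function.update_self i Pi' P
        have hQd : ∀ k, k ≠ i → Q k = P k := fun k hk => Function.update_of_ne hk Pi' P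
        have hdiag : ∀ k, Q k k = P k k := by
          intro k
          rcases eq_or_ne k i with rfl | hk
          · rw [hQi]
          · rw [hQd k hk]
        have hQik : ∀ k, Q i k = P k k := by intro k; rw [hQi]
        have hQN : ¬ inNbar Q i := by
          rintro ⟨k, hk⟩
          rw [hdiag k, hQik k] at hk
          exact ssubset_irrefl _ hk
        have hα : alpha Q i = 1 := by
          have he : eta Q i = 0 := by
            unfold eta
            rw [Finset.card_eq_zero, Finset.filter_eq_empty_iff]
            intro k _
            simp [hdiag k, hQik k]
          unfold alpha
          rw [if_neg hQN, he]
          simp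
        have hEQ : effSets Q = effSets P := by
          funext k
          rcases eq_or_ne k i with rfl | hk
          · unfold effSets
            rw [if_neg hQN, if_neg (hstep1 k).1, hQi]
          · have h1 : inNbar Q k = inNbar P k := by
              unfold inNbar
              simp only [hdiag, hQd k hk]
            unfold effSets
            rw [h1, hQd k hk]
        have hdev : util Rt (mech2 s Q) i = gammaStar s (effSets P) := by
          rw [util_mech2_of_subset s Rt Q i (hRt i)
            (by rw [hEQ]; exact (hstep1 i).2.1), hα, hEQ, one_mul]
        have hNEi := hNE i Pi'
        rw [← hQdef, hdev, hform i] at hNEi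
        have h1 : 1 * gammaStar s (effSets P) ≤ alpha P i * gammaStar s (effSets P) := by
          linarith
        have h2 := le_of_mul_le_mul_right h1 hγE
        exact le_antisymm (alpha_le_one P i) h2
      -- consensus: everyone's report tuple matches the diagonal
      have hcons : ∀ i k, P k k = P i k := by
        intro i k
        have hα := hstep2 i
        unfold alpha at hα
        rw [if_neg (hstep1 i).1] at hα
        have hn' : (0:ℝ) < n := by exact_mod_cast hn
        have hzero : (eta P i : ℝ) / n = 0 := by linarith
        have he : eta P i = 0 := by
          have : (eta P i : ℝ) = 0 := by
            field_simp at hzero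
            exact_mod_cast hzero
          exact_mod_cast this
        unfold eta at he
        rw [Finset.card_eq_zero, Finset.filter_eq_empty_iff] at he
        have := he (Finset.mem_univ k)
        simpa using this
      -- Step 3: the equilibrium rate is at least the truthful rate
      have hstep3 : gammaStar s Rt ≤ gammaStar s (effSets P) := by
        by_cases hall : ∀ k, effSets P k = Rt k
        · rw [funext hall]
        · push_neg at hall
          obtain ⟨k, hk⟩ := hall
          have hEk : effSets P k = P k k := by
            unfold effSets; rw [if_neg (hstep1 k).1]
          have hsubk : Rt k ⊆ P k k := by
            rw [← hEk]; exact (hstep1 k).2.1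
          rw [hEk] at hk
          have hssub : Rt k ⊂ P k k := lt_of_le_of_ne hsubk (Ne.symm hk)
          set Pi' : Fin n → Finset (Fin m) := fun j => if j = k then Rt k else P j j
            with hPi'
          set Q := Function.update P k Pi' with hQdef
          have hQk : Q k = Pi' := Function.update_self k Pi' P
          have hQd : ∀ j, j ≠ k → Q j = P j := fun j hj => Function.update_of_ne hj Pi' P
          have hdiag : ∀ j, Q j j = if j = k then Rt k else P j j := by
            intro j
            rcases eq_or_ne j k with rfl | hj
            · rw [hQk]
            · rw [hQd j hj, if_neg hj]
          have hQkj : ∀ j, Q k j = if j = k then Rt k else P j j := by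
            intro j; rw [hQk]
          have hQN : ¬ inNbar Q k := by
            rintro ⟨j, hj⟩
            rw [hdiag j, hQkj j] at hj
            exact ssubset_irrefl _ hj
          have hα : alpha Q k = 1 := by
            have he : eta Q k = 0 := by
              unfold eta
              rw [Finset.card_eq_zero, Finset.filter_eq_empty_iff]
              intro j _
              simp [hdiag j, hQkj j]
            unfold alpha
            rw [if_neg hQN, he]
            simp
          have hEQk : effSets Q k = Rt k := by
            unfold effSets; rw [if_neg hQN, hQk, hPi']; simp
          have hEQj : ∀ j, j ≠ k → effSets Q j = ∅ := by
            intro j hj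
            have hin : inNbar Q j := by
              refine ⟨k, ?_⟩
              have h1 : Q k k = Rt k := by rw [hdiag k]; simp
              have h2 : Q j k = P k k := by rw [hQd j hj, ← hcons j k]
              rw [h1, h2]
              exact hssub
            unfold effSets; rw [if_pos hin]
          have hdev : util Rt (mech2 s Q) k = gammaStar s (effSets Q) := by
            rw [util_mech2_of_subset s Rt Q k (hRt k)
              (by rw [hEQk] : Rt k ⊆ effSets Q k), hα, one_mul]
          have hanti : gammaStar s Rt ≤ gammaStar s (effSets Q) := by
            refine gammaStar_anti hs (fun j => Finset.sum_le_sum fun i' _ => ?_)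
              ⟨k, by rw [hEQk]; exact hRt k⟩
            rcases eq_or_ne i' k with rfl | hi'
            · rw [show w (effSets Q) i' j = w Rt i' j by unfold w; rw [hEQk]]
            · rw [show w (effSets Q) i' j = 0 by
                rw [w_eq_zero_of_not_mem (by rw [hEQj i' hi']; exact Finset.notMem_empty j)]]
              exact w_nonneg _ _ _
          have hNEk := hNE k Pi'
          rw [← hQdef, hdev, hform k, hstep2 k, one_mul] at hNEk
          exact le_trans hanti hNEk
      -- assemble maxmin optimality
      have hallutil : ∀ i, util Rt (mech2 s P) i = gammaStar s (effSets P) := by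
        intro i
        rw [hform i, hstep2 i, one_mul]
      constructor
      · constructor
        · intro i j
          exact mul_nonneg (alpha_nonneg P i)
            (mul_nonneg (gammaStar_nonneg _ _) (w_nonneg _ _ _))
        · intro j
          have hpt : ∀ i, mech2 s P i j = gammaStar s (effSets P) * w (effSets P) i j := by
            intro i
            unfold mech2 mech1
            rw [hstep2 i, one_mul]
          calc ∑ i, mech2 s P i j
              = ∑ i, gammaStar s (effSets P) * w (effSets P) i j :=
                Finset.sum_congr rfl fun i _ => hpt i
            _ = gammaStar s (effSets P) * ∑ i, w (effSets P) i j :=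
                (Finset.mul_sum _ _ _).symm
            _ ≤ s j := gammaStar_le_supply hs _ j
      · intro y hy
        have h1 : minUtil Rt y ≤ gammaStar s Rt := minUtil_le_gammaStar hs hn Rt hRt y hy
        have h2 : minUtil Rt (mech2 s P) = gammaStar s (effSets P) := by
          haveI : Nonempty (Fin n) := ⟨⟨0, hn⟩⟩
          unfold minUtil
          rw [show (fun i => util Rt (mech2 s P) i) = fun _ => gammaStar s (effSets P)
            from funext hallutil]
          rw [Set.range_const, csInf_singleton]
        rw [h2]
        exact le_trans h1 hstep3

end BandwidthAlloc
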